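/- arXiv:1508.05206 — 2 statements merged into one kernel-verified Lean document; each statement's English description precedes it below -/
import Mathlib

section
/- For all real numbers a, b, every real r ≥ 2, and every k > 0, one has (a - b)(a·min(|a|,k)^{r-2} - b·min(|b|,k)^{r-2}) ≥ (4(r-1)/r²)·(a·min(|a|,k)^{r/2-1} - b·min(|b|,k)^{r/2-1})². -/
open Real MeasureTheory Set intervalIntegral

noncomputable def stmt0F (k p t : ℝ) : ℝ := t * (min |t| k) ^ (p - 1)
noncomputable def stmt0f (k p t : ℝ) : ℝ :=
  (if -k ≤ t ∧ t < k then p else 1) * (min |t| k) ^ (p - 1)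

lemma stmt0_key_neg (p : ℝ) (hp : 1 < p) (t : ℝ) (ht : t < 0) :
    HasDerivAt (fun s : ℝ => s * (-s) ^ (p - 1)) (p * (-t) ^ (p - 1)) t := by
  have hx : (0:ℝ) < -t := by linarith
  have h1 : HasDerivAt (fun s : ℝ => (-s) ^ (p-1)) ((p-1) * (-t) ^ (p-1-1) * (-1)) t :=
    (Real.hasDerivAt_rpow_const (x := -t) (p := p-1) (Or.inl hx.ne')).comp t (hasDerivAt_neg t)
  have h2 : HasDerivAt (fun s : ℝ => s * (-s) ^ (p-1)) _ t := (hasDerivAt_id t).mul h1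
  convert h2 using 1
  have h3 : (-t) ^ (p-1) = (-t) ^ (p-1-1) * (-t) := by
    rw [← Real.rpow_add_one hx.ne']; norm_num
  rw [h3]; simp only [id_eq]; ring

lemma stmt0_key_pos (p : ℝ) (hp : 1 < p) (t : ℝ) (ht : 0 < t) :
    HasDerivAt (fun s : ℝ => s * s ^ (p - 1)) (p * t ^ (p - 1)) t := by
  have h1 : HasDerivAt (fun s : ℝ => s ^ (p-1)) ((p-1) * t ^ (p-1-1)) t :=
    Real.hasDerivAt_rpow_const (Or.inl ht.ne')
  have h2 : HasDerivAt (fun s : ℝ => s * s ^ (p-1)) _ t := (hasDerivAt_id t).mul h1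
  convert h2 using 1
  have h3 : t ^ (p-1) = t ^ (p-1-1) * t := by
    rw [← Real.rpow_add_one ht.ne']; norm_num
  rw [h3]; simp only [id_eq]; ring

lemma stmt0_deriv (k p : ℝ) (hk : 0 < k) (hp : 1 < p) (t : ℝ) :
    HasDerivWithinAt (stmt0F k p) (stmt0f k p t) (Ici t) t := by
  have hp1 : (0:ℝ) < p - 1 := by linarith
  rcases lt_trichotomy t 0 with ht | ht | ht
  · rcases lt_trichotomy t (-k) with h1 | h1 | h1
    · -- t < -k : locally linear
      have heq : stmt0F k p =ᶠ[nhds t] fun s => s * k ^ (p-1) := by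
        filter_upwards [Iio_mem_nhds h1] with s hs
        have hs' : s < -k := mem_Iio.mp hs
        have hm : min |s| k = k := min_eq_right (by rw [abs_of_neg (by linarith : s < 0)]; linarith)
        unfold stmt0F; rw [hm]
      have hd : HasDerivAt (fun s : ℝ => s * k ^ (p-1)) (k ^ (p-1)) t := by
        simpa using (hasDerivAt_id t).mul_const (k ^ (p-1))
      have hv : stmt0f k p t = k ^ (p-1) := by
        have hm : min |t| k = k := min_eq_right (by rw [abs_of_neg (by linarith : t < 0)]; linarith)
        unfold stmt0f
        rw [hm, if_neg (by push_neg; intro h; linarith), one_mul]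
      rw [hv]
      exact (hd.congr_of_eventuallyEq heq).hasDerivWithinAt
    · -- t = -k
      subst h1
      have hm : min |(-k)| k = k := by rw [abs_neg, abs_of_pos hk, min_self]
      have hv : stmt0f k p (-k) = p * k ^ (p-1) := by
        unfold stmt0f
        rw [hm, if_pos ⟨le_refl _, by linarith⟩]
      rw [hv]
      have hkey := stmt0_key_neg p hp (-k) ht
      rw [neg_neg] at hkey
      apply hkey.hasDerivWithinAt.congr_of_eventuallyEq
      · filter_upwards [self_mem_nhdsWithin,
          mem_nhdsWithin_of_mem_nhds (Iio_mem_nhds (by linarith : -k < 0))] with s hs1 hs2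
        have hs1' : -k ≤ s := hs1
        have hs2' : s < 0 := hs2
        have hm' : min |s| k = -s := by
          rw [abs_of_neg hs2']; exact min_eq_left (by linarith)
        unfold stmt0F; rw [hm']
      · unfold stmt0F; rw [hm]; rw [neg_neg] -- goal: -k * (min..)^.. = -k * (- -k)^..
    · -- -k < t < 0
      have heq : stmt0F k p =ᶠ[nhds t] fun s => s * (-s) ^ (p-1) := by
        filter_upwards [Ioo_mem_nhds h1 ht] with s hs
        obtain ⟨hs1, hs2⟩ := hs
        have hm : min |s| k = -s := by rw [abs_of_neg hs2]; exact min_eq_left (by linarith)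
        unfold stmt0F; rw [hm]
      have hv : stmt0f k p t = p * (-t) ^ (p-1) := by
        have hm : min |t| k = -t := by rw [abs_of_neg ht]; exact min_eq_left (by linarith)
        unfold stmt0f
        rw [hm, if_pos ⟨by linarith, by linarith⟩]
      rw [hv]
      exact ((stmt0_key_neg p hp t ht).congr_of_eventuallyEq heq).hasDerivWithinAt
  · -- t = 0
    subst ht
    have hv : stmt0f k p 0 = 0 := by
      unfold stmt0f
      rw [abs_zero, min_eq_left hk.le, Real.zero_rpow hp1.ne', mul_zero]
    rw [hv]
    apply HasDerivAt.hasDerivWithinAt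
    rw [hasDerivAt_iff_tendsto_slope]
    have hcont : Filter.Tendsto (fun s : ℝ => (min |s| k) ^ (p-1)) (nhds 0) (nhds 0) := by
      have h1 : ContinuousAt (fun x : ℝ => x ^ (p-1)) 0 :=
        (Real.continuous_rpow_const hp1.le).continuousAt
      have hmc : ContinuousAt (fun s : ℝ => min |s| k) 0 :=
        (continuous_abs.min continuous_const).continuousAt
      have hm0 : min |(0:ℝ)| k = 0 := by rw [abs_zero]; exact min_eq_left hk.le
      have h2 : ContinuousAt (fun s : ℝ => (min |s| k) ^ (p-1)) 0 :=
        ContinuousAt.comp (x := (0:ℝ)) (g := fun x : ℝ => x ^ (p-1)) (by rw [hm0]; exact h1) hmc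
      have h3 := h2.tendsto
      simp only [Function.comp, abs_zero, min_eq_left hk.le, Real.zero_rpow hp1.ne'] at h3
      exact h3
    apply Filter.Tendsto.congr' _ (hcont.mono_left nhdsWithin_le_nhds)
    filter_upwards [self_mem_nhdsWithin] with s hs
    have hs' : s ≠ 0 := hs
    simp only [slope_def_field, stmt0F]
    rw [abs_zero, min_eq_left hk.le, Real.zero_rpow hp1.ne']
    field_simp
    ring
  · rcases lt_trichotomy t k with h1 | h1 | h1
    · -- 0 < t < k
      have heq : stmt0F k p =ᶠ[nhds t] fun s => s * s ^ (p-1) := by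
        filter_upwards [Ioo_mem_nhds ht h1] with s hs
        obtain ⟨hs1, hs2⟩ := hs
        have hm : min |s| k = s := by rw [abs_of_pos hs1]; exact min_eq_left (by linarith)
        unfold stmt0F; rw [hm]
      have hv : stmt0f k p t = p * t ^ (p-1) := by
        have hm : min |t| k = t := by rw [abs_of_pos ht]; exact min_eq_left (by linarith)
        unfold stmt0f
        rw [hm, if_pos ⟨by linarith, h1⟩]
      rw [hv]
      exact ((stmt0_key_pos p hp t ht).congr_of_eventuallyEq heq).hasDerivWithinAt
    · -- t = k
      subst h1
      have hm : min |t| t = t := by rw [abs_of_pos ht, min_self]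
      have hv : stmt0f t p t = t ^ (p-1) := by
        unfold stmt0f
        rw [hm, if_neg (by push_neg; intro h; exact le_refl t), one_mul]
      rw [hv]
      have hd : HasDerivAt (fun s : ℝ => s * t ^ (p-1)) (t ^ (p-1)) t := by
        simpa using (hasDerivAt_id t).mul_const (t ^ (p-1))
      apply hd.hasDerivWithinAt.congr
      · intro s hs
        have hs' : t ≤ s := hs
        have hm' : min |s| t = t := min_eq_right (by rw [abs_of_pos (by linarith)]; exact hs')
        unfold stmt0F; rw [hm']
      · unfold stmt0F; rw [hm]
    · -- t > k
      have heq : stmt0F k p =ᶠ[nhds t] fun s => s * k ^ (p-1) := by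
        filter_upwards [Ioi_mem_nhds h1] with s hs
        have hs' : k < s := mem_Ioi.mp hs
        have hm : min |s| k = k := min_eq_right (by rw [abs_of_pos (by linarith)]; linarith)
        unfold stmt0F; rw [hm]
      have hd : HasDerivAt (fun s : ℝ => s * k ^ (p-1)) (k ^ (p-1)) t := by
        simpa using (hasDerivAt_id t).mul_const (k ^ (p-1))
      have hv : stmt0f k p t = k ^ (p-1) := by
        have hm : min |t| k = k := min_eq_right (by rw [abs_of_pos (by linarith)]; linarith)
        unfold stmt0f
        rw [hm, if_neg (by push_neg; intro h; linarith), one_mul]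
      rw [hv]
      exact (hd.congr_of_eventuallyEq heq).hasDerivWithinAt

lemma stmt0_min_nonneg (k t : ℝ) (hk : 0 < k) : 0 ≤ min |t| k :=
  le_min (abs_nonneg t) hk.le

lemma stmt0f_nonneg (k p : ℝ) (hk : 0 < k) (hp : 1 < p) (t : ℝ) : 0 ≤ stmt0f k p t := by
  unfold stmt0f
  have := stmt0_min_nonneg k t hk
  have h1 : (0:ℝ) ≤ min |t| k ^ (p-1) := Real.rpow_nonneg this _
  split <;> positivity

lemma stmt0f_le (k p : ℝ) (hk : 0 < k) (hp : 1 < p) (t : ℝ) : stmt0f k p t ≤ p * k ^ (p-1) := by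
  unfold stmt0f
  have h0 := stmt0_min_nonneg k t hk
  have h1 : min |t| k ^ (p-1) ≤ k ^ (p-1) :=
    Real.rpow_le_rpow h0 (min_le_right _ _) (by linarith)
  have h2 : (0:ℝ) ≤ min |t| k ^ (p-1) := Real.rpow_nonneg h0 _
  split
  · nlinarith
  · nlinarith [Real.rpow_nonneg hk.le (p-1)]

lemma stmt0_cont (k p : ℝ) (hp : 1 < p) : Continuous (stmt0F k p) := by
  apply continuous_id.mul
  rw [continuous_iff_continuousAt]
  intro t
  exact (Real.continuousAt_rpow_const _ _ (Or.inr (by linarith))).comp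
    ((continuous_abs.min continuous_const).continuousAt)

lemma stmt0_measurable (k p : ℝ) (hp : 1 < p) : Measurable (stmt0f k p) := by
  apply Measurable.mul
  · have : Measurable fun t : ℝ => if t ∈ Ico (-k) k then p else (1:ℝ) :=
      Measurable.ite measurableSet_Ico measurable_const measurable_const
    simpa [Set.mem_Ico] using this
  · exact ((Real.continuous_rpow_const (by linarith)).comp
      (continuous_abs.min continuous_const)).measurable

lemma stmt0_intInt (k p : ℝ) (hk : 0 < k) (hp : 1 < p) (b a : ℝ) :
    IntervalIntegrable (stmt0f k p) volume b a := by
  apply (intervalIntegrable_const (c := p * k ^ (p-1))).mono_fun'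
    (stmt0_measurable k p hp).aestronglyMeasurable
  filter_upwards with t
  rw [Real.norm_eq_abs, abs_of_nonneg (stmt0f_nonneg k p hk hp t)]
  exact stmt0f_le k p hk hp t

lemma stmt0_sq_intInt (k p : ℝ) (hk : 0 < k) (hp : 1 < p) (b a : ℝ) :
    IntervalIntegrable (fun t => (stmt0f k p t)^2) volume b a := by
  apply (intervalIntegrable_const (c := (p * k ^ (p-1))^2)).mono_fun'
    (((stmt0_measurable k p hp).pow measurable_const).aestronglyMeasurable)
  filter_upwards with t
  rw [Real.norm_eq_abs, abs_of_nonneg (sq_nonneg _)]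
  have h1 := stmt0f_nonneg k p hk hp t
  have h2 := stmt0f_le k p hk hp t
  nlinarith

lemma stmt0_ftc (k p : ℝ) (hk : 0 < k) (hp : 1 < p) (b a : ℝ) (hba : b ≤ a) :
    ∫ t in b..a, stmt0f k p t = stmt0F k p a - stmt0F k p b :=
  intervalIntegral.integral_eq_sub_of_hasDeriv_right_of_le hba
    ((stmt0_cont k p hp).continuousOn)
    (fun x _ => (stmt0_deriv k p hk hp x).mono Ioi_subset_Ici_self)
    (stmt0_intInt k p hk hp b a)

lemma stmt0_cs (f : ℝ → ℝ) (b a : ℝ) (hba : b ≤ a)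
    (h1 : IntervalIntegrable f volume b a)
    (h2 : IntervalIntegrable (fun t => (f t)^2) volume b a) :
    (∫ t in b..a, f t)^2 ≤ (a - b) * ∫ t in b..a, (f t)^2 := by
  rcases eq_or_lt_of_le hba with rfl | hlt
  · simp
  have hL0 : 0 < a - b := by linarith
  set I := ∫ t in b..a, f t with hI
  set S := ∫ t in b..a, (f t)^2 with hS
  set A := I / (a - b) with hA
  have hnn : 0 ≤ ∫ t in b..a, (f t - A)^2 :=
    intervalIntegral.integral_nonneg hba (fun u _ => sq_nonneg _)
  have hexp : ∫ t in b..a, (f t - A)^2 = S - 2*A*I + A^2*(a-b) := by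
    have hcongr : ∀ t ∈ Set.uIcc b a, (f t - A)^2 = (f t)^2 - 2*A*(f t) + A^2 :=
      fun t _ => by ring
    rw [intervalIntegral.integral_congr hcongr,
      intervalIntegral.integral_add ((h2.sub (h1.const_mul (2*A)))) intervalIntegrable_const,
      intervalIntegral.integral_sub h2 (h1.const_mul (2*A)),
      intervalIntegral.integral_const_mul, intervalIntegral.integral_const]
    simp only [smul_eq_mul]
    ring
  have hIA : I = A * (a - b) := by rw [hA, div_mul_cancel₀ _ hL0.ne']
  nlinarith [hnn, hexp, hL0, sq_nonneg A]

lemma stmt0_ptwise (k r : ℝ) (hk : 0 < k) (hr : 2 < r) (t : ℝ) :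
    4*(r-1)/r^2 * (stmt0f k (r/2) t)^2 ≤ stmt0f k (r-1) t := by
  have hm0 : 0 ≤ min |t| k := stmt0_min_nonneg k t hk
  have hsq : ((min |t| k) ^ (r/2 - 1))^2 = (min |t| k)^(r - 2) := by
    have e1 : ((min |t| k) ^ (r/2 - 1)) ^ ((2:ℕ):ℝ) = (min |t| k) ^ ((r/2-1)*2) :=
      (Real.rpow_mul hm0 _ _).symm
    rw [Real.rpow_natCast] at e1
    rw [e1]
    norm_num
    ring_nf
  have hrne : r ≠ 0 := by linarith
  unfold stmt0f
  split_ifs with hc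
  · rw [mul_pow, hsq]
    apply le_of_eq
    rw [show r - 1 - 1 = r - 2 from by ring]
    field_simp
    ring
  · rw [one_mul, one_mul, hsq, show r - 1 - 1 = r - 2 from by ring]
    have hc1 : 4*(r-1)/r^2 ≤ 1 := by
      rw [div_le_one (by positivity)]
      nlinarith
    nlinarith [Real.rpow_nonneg hm0 (r-2)]

lemma stmt0_main (a b r k : ℝ) (hr : 2 < r) (hk : 0 < k) (hba : b ≤ a) :
    (a - b) * (a * (min |a| k) ^ (r - 2) - b * (min |b| k) ^ (r - 2)) ≥
      (4 * (r - 1) / r ^ 2) *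
        (a * (min |a| k) ^ (r / 2 - 1) - b * (min |b| k) ^ (r / 2 - 1)) ^ 2 := by
  have hp1 : 1 < r - 1 := by linarith
  have hp2 : 1 < r / 2 := by linarith
  have hg := stmt0_ftc k (r-1) hk hp1 b a hba
  have hG := stmt0_ftc k (r/2) hk hp2 b a hba
  have hgF : stmt0F k (r-1) a - stmt0F k (r-1) b
      = a * (min |a| k) ^ (r - 2) - b * (min |b| k) ^ (r - 2) := by
    unfold stmt0F; rw [show r - 1 - 1 = r - 2 from by ring]
  have hGF : stmt0F k (r/2) a - stmt0F k (r/2) b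
      = a * (min |a| k) ^ (r/2 - 1) - b * (min |b| k) ^ (r/2 - 1) := by
    unfold stmt0F; ring_nf
  rw [← hgF, ← hGF, ← hg, ← hG]
  set c : ℝ := 4 * (r - 1) / r ^ 2 with hc
  have hc0 : 0 ≤ c := by
    apply div_nonneg (by linarith) (by positivity)
  have hcs := stmt0_cs (stmt0f k (r/2)) b a hba (stmt0_intInt k (r/2) hk hp2 b a)
    (stmt0_sq_intInt k (r/2) hk hp2 b a)
  have hmono : ∫ t in b..a, c * (stmt0f k (r/2) t)^2 ≤ ∫ t in b..a, stmt0f k (r-1) t := by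
    apply intervalIntegral.integral_mono_on hba
      ((stmt0_sq_intInt k (r/2) hk hp2 b a).const_mul c)
      (stmt0_intInt k (r-1) hk hp1 b a)
    intro t _
    exact stmt0_ptwise k r hk hr t
  rw [intervalIntegral.integral_const_mul] at hmono
  have hab0 : 0 ≤ a - b := by linarith
  calc c * (∫ t in b..a, stmt0f k (r/2) t)^2
      ≤ c * ((a - b) * ∫ t in b..a, (stmt0f k (r/2) t)^2) := by
        exact mul_le_mul_of_nonneg_left hcs hc0
    _ = (a - b) * (c * ∫ t in b..a, (stmt0f k (r/2) t)^2) := by ring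
    _ ≤ (a - b) * ∫ t in b..a, stmt0f k (r-1) t :=
        mul_le_mul_of_nonneg_left hmono hab0

theorem stmt_0 (a b r k : ℝ) (hr : 2 ≤ r) (hk : 0 < k) :
    (a - b) * (a * (min |a| k) ^ (r - 2) - b * (min |b| k) ^ (r - 2)) ≥
      (4 * (r - 1) / r ^ 2) *
        (a * (min |a| k) ^ (r / 2 - 1) - b * (min |b| k) ^ (r / 2 - 1)) ^ 2 := by
  rcases eq_or_lt_of_le hr with rfl | hr2
  · norm_num [Real.rpow_zero]
    nlinarith [sq_nonneg (a - b)]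
  · rcases le_total b a with hba | hba
    · exact stmt0_main a b r k hr2 hk hba
    · have h := stmt0_main b a r k hr2 hk hba
      have e1 : (b - a) * (b * (min |b| k) ^ (r - 2) - a * (min |a| k) ^ (r - 2))
          = (a - b) * (a * (min |a| k) ^ (r - 2) - b * (min |b| k) ^ (r - 2)) := by ring
      have e2 : (b * (min |b| k) ^ (r / 2 - 1) - a * (min |a| k) ^ (r / 2 - 1)) ^ 2
          = (a * (min |a| k) ^ (r / 2 - 1) - b * (min |b| k) ^ (r / 2 - 1)) ^ 2 := by ring
      rw [e1, e2] at h
      exact h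
end

section
/- Let m > 2, γ := √(m/2), C > 0, and let (Tₙ) be a sequence of reals with Tₙ ≥ 1 satisfying T_{n+1} ≤ (1 + C)^{1/r_{n+1}} · r_{n+1}^{1/r_{n+1}} · Tₙ^{γ² rₙ / r_{n+1}} for all n, where r₀ = m + 1 and r_{n+1} = γ² rₙ − m + 2. Then (Tₙ) is bounded above. -/
theorem stmt_12 (m : ℝ) (hm : 2 < m) (γ : ℝ) (hγ : γ = Real.sqrt (m / 2))
    (C : ℝ) (hC : 0 < C)
    (r : ℕ → ℝ) (hr0 : r 0 = m + 1)
    (hrec : ∀ n : ℕ, r (n + 1) = γ ^ 2 * r n - m + 2)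
    (T : ℕ → ℝ) (hT1 : ∀ n, 1 ≤ T n)
    (hT : ∀ n : ℕ, T (n + 1) ≤
      (1 + C) ^ ((1 : ℝ) / r (n + 1)) * (r (n + 1)) ^ ((1 : ℝ) / r (n + 1)) *
        T n ^ (γ ^ 2 * r n / r (n + 1))) :
    ∃ M : ℝ, ∀ n : ℕ, T n ≤ M := by
  have hγ2 : γ ^ 2 = m / 2 := by
    rw [hγ, sq, Real.mul_self_sqrt (by positivity)]
  have hγ2gt : 1 < γ ^ 2 := by rw [hγ2]; linarith
  -- explicit formula for r
  have hrn : ∀ n, r n = (m - 1) * (γ ^ 2) ^ n + 2 := by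
    intro n
    induction n with
    | zero => simp [hr0]; ring
    | succ n ih =>
      rw [hrec n, ih, hγ2]
      ring
  have hpow1 : ∀ n : ℕ, 1 ≤ (γ ^ 2) ^ n := fun n => one_le_pow₀ hγ2gt.le
  have hrlb : ∀ n, m + 1 ≤ r n := by
    intro n
    have := hpow1 n
    rw [hrn n]
    nlinarith
  have hrpos : ∀ n, 0 < r n := fun n => lt_of_lt_of_le (by linarith) (hrlb n)
  have hTpos : ∀ n, 0 < T n := fun n => lt_of_lt_of_le one_pos (hT1 n)
  have hTlog : ∀ n, 0 ≤ Real.log (T n) := fun n => Real.log_nonneg (hT1 n)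
  -- multiplied logarithmic recursion
  have hP : ∀ n, r (n+1) * Real.log (T (n+1)) ≤
      Real.log (1+C) + Real.log (r (n+1)) + γ ^ 2 * r n * Real.log (T n) := by
    intro n
    have hr1 : 0 < r (n+1) := hrpos (n+1)
    have h1C : (0:ℝ) < 1 + C := by linarith
    have hlog : Real.log (T (n+1)) ≤
        (1 / r (n+1)) * Real.log (1+C) + (1 / r (n+1)) * Real.log (r (n+1)) +
          (γ ^ 2 * r n / r (n+1)) * Real.log (T n) := by
      have := Real.log_le_log (hTpos (n+1)) (hT n)
      rwa [Real.log_mul (mul_pos (Real.rpow_pos_of_pos h1C _) (Real.rpow_pos_of_pos hr1 _)).ne'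
          (Real.rpow_pos_of_pos (hTpos n) _).ne',
        Real.log_mul (Real.rpow_pos_of_pos h1C _).ne' (Real.rpow_pos_of_pos hr1 _).ne',
        Real.log_rpow h1C, Real.log_rpow hr1, Real.log_rpow (hTpos n)] at this
    have h2 := mul_le_mul_of_nonneg_left hlog hr1.le
    have h3 : r (n+1) * ((1 / r (n+1)) * Real.log (1+C) + (1 / r (n+1)) * Real.log (r (n+1)) +
          (γ ^ 2 * r n / r (n+1)) * Real.log (T n)) =
        Real.log (1+C) + Real.log (r (n+1)) + γ ^ 2 * r n * Real.log (T n) := by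
      field_simp
    linarith [h2, h3.le, h3.ge]
  -- constants
  set B := Real.log (γ ^ 2) with hB
  set A := Real.log (1+C) + Real.log (m+1) + B with hA
  set F := B / (γ ^ 2 - 1) with hF
  set E := (F + A) / (γ ^ 2 - 1) with hE
  set K := r 0 * Real.log (T 0) + E with hK
  have hBpos : 0 < B := Real.log_pos hγ2gt
  have hApos : 0 < A := by
    have := Real.log_pos (by linarith : (1:ℝ) < 1 + C)
    have := Real.log_pos (by linarith : (1:ℝ) < m + 1)
    positivity
  have hγ2sub : 0 < γ ^ 2 - 1 := by linarith
  have hFpos : 0 < F := div_pos hBpos hγ2sub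
  have hEpos : 0 < E := div_pos (by linarith) hγ2sub
  have hFeq : (γ ^ 2 - 1) * F = B := by
    rw [hF]; field_simp
  have hEeq : (γ ^ 2 - 1) * E = F + A := by
    rw [hE]; field_simp
  have hKpos : 0 < K := by
    have := mul_nonneg (hrpos 0).le (hTlog 0)
    rw [hK]; linarith
  -- bound on the additive term
  have hc : ∀ n : ℕ, Real.log (1+C) + Real.log (r (n+1)) ≤ A + B * n := by
    intro n
    have hx := hpow1 (n+1)
    have hub : r (n+1) ≤ (m+1) * (γ ^ 2) ^ (n+1) := by
      rw [hrn (n+1)]; nlinarith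
    have hlog1 : Real.log (r (n+1)) ≤ Real.log ((m+1) * (γ ^ 2) ^ (n+1)) :=
      Real.log_le_log (hrpos (n+1)) hub
    have hlog2 : Real.log ((m+1) * (γ ^ 2) ^ (n+1)) =
        Real.log (m+1) + (n+1 : ℝ) * B := by
      rw [Real.log_mul (by positivity) (by positivity), Real.log_pow]
      push_cast
      ring
    rw [hA]
    rw [hlog2] at hlog1
    linarith
  -- key inductive bound
  have hPK : ∀ n : ℕ, r n * Real.log (T n) ≤ K * (γ ^ 2) ^ n - E - F * n := by
    intro n
    induction n with
    | zero => simp [hK]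
    | succ n ih =>
      have h4 := mul_le_mul_of_nonneg_left ih (sq_nonneg γ)
      have h5 := hP n
      have h6 := hc n
      have heq : A + B * n + γ ^ 2 * (K * (γ ^ 2) ^ n - E - F * n) =
          K * (γ ^ 2) ^ (n+1) - E - F * (n+1) := by
        rw [pow_succ]
        push_cast
        linear_combination (-1 : ℝ) * hEeq - (n : ℝ) * hFeq
      calc r (n+1) * Real.log (T (n+1))
          ≤ Real.log (1+C) + Real.log (r (n+1)) + γ ^ 2 * r n * Real.log (T n) := h5
        _ ≤ A + B * n + γ ^ 2 * (r n * Real.log (T n)) := by linarith [mul_assoc (γ ^ 2) (r n) (Real.log (T n))]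
        _ ≤ A + B * n + γ ^ 2 * (K * (γ ^ 2) ^ n - E - F * n) := by linarith
        _ = K * (γ ^ 2) ^ (n+1) - E - F * (n+1 : ℕ) := by push_cast; linarith [heq]
  -- conclude
  refine ⟨Real.exp (K / (m - 1)), fun n => ?_⟩
  have hrn' := hrn n
  have hx := hpow1 n
  have hnn : (0:ℝ) ≤ (n:ℝ) := Nat.cast_nonneg n
  have h7 : r n * Real.log (T n) ≤ K * (γ ^ 2) ^ n := by
    have := hPK n
    nlinarith
  have h8 : K * (γ ^ 2) ^ n ≤ (K / (m - 1)) * r n := by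
    rw [hrn', div_mul_eq_mul_div, le_div_iff₀ (by linarith : (0:ℝ) < m - 1)]
    nlinarith
  have h9 : Real.log (T n) ≤ K / (m - 1) := by
    have h10 : r n * Real.log (T n) ≤ r n * (K / (m - 1)) := by
      calc r n * Real.log (T n) ≤ (K / (m - 1)) * r n := le_trans h7 h8
        _ = r n * (K / (m - 1)) := by ring
    exact le_of_mul_le_mul_left h10 (hrpos n)
  calc T n = Real.exp (Real.log (T n)) := (Real.exp_log (hTpos n)).symm
    _ ≤ Real.exp (K / (m - 1)) := Real.exp_le_exp.mpr h9
end
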